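/- For all real numbers p, q ∈ [0, ∞) and η ∈ (0, 1), there exists a constant C > 0 such that for all real numbers s, t with 0 < s ≤ t, one has (t − s)^p ≤ C · ∫_{ηs}^{t} (t − r)^q · r^{p − 1 − q} dr. -/

import Mathlib

open MeasureTheory intervalIntegral Real

private lemma tpie_integrable {q e t a b : ℝ} (hq : 0 ≤ q) (ha : 0 < a) (hab : a ≤ b) :
    IntervalIntegrable (fun r => (t - r) ^ q * r ^ e) volume a b := by
  apply ContinuousOn.intervalIntegrable
  apply ContinuousOn.mul
  · exact ((Real.continuous_rpow_const hq).comp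
      (continuous_const.sub continuous_id)).continuousOn
  · intro x hx
    rw [Set.uIcc_of_le hab] at hx
    exact (Real.continuousAt_rpow_const x e (Or.inl (ha.trans_le hx.1).ne')).continuousWithinAt

private lemma tpie_integral_pow {q : ℝ} (a t : ℝ) (hq : 0 ≤ q) :
    ∫ r in a..t, (t - r) ^ q = (t - a) ^ (q + 1) / (q + 1) := by
  have h := intervalIntegral.integral_comp_sub_left (a := a) (b := t)
    (fun x : ℝ => x ^ q) t
  rw [h, sub_self, integral_rpow (Or.inl (by linarith)),
    Real.zero_rpow (by positivity : q + 1 ≠ 0)]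
  ring

private lemma tpie_rpow_min {a b r e : ℝ} (ha : 0 < a) (har : a ≤ r) (hrb : r ≤ b) :
    min (a ^ e) (b ^ e) ≤ r ^ e := by
  rcases le_or_gt 0 e with h | h
  · exact (min_le_left _ _).trans (Real.rpow_le_rpow ha.le har h)
  · exact (min_le_right _ _).trans (Real.rpow_le_rpow_of_nonpos (ha.trans_le har) hrb h.le)

private lemma tpie_lower {q e a t m : ℝ} (hq : 0 ≤ q) (ha : 0 < a) (hat : a ≤ t)
    (_hm : 0 ≤ m) (hme : ∀ r ∈ Set.Icc a t, m ≤ r ^ e) :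
    m * ((t - a) ^ (q + 1) / (q + 1)) ≤ ∫ r in a..t, (t - r) ^ q * r ^ e := by
  have h1 : (∫ r in a..t, m * (t - r) ^ q) = m * ((t - a) ^ (q + 1) / (q + 1)) := by
    rw [intervalIntegral.integral_const_mul, tpie_integral_pow a t hq]
  rw [← h1]
  apply intervalIntegral.integral_mono_on hat
    ((continuous_const.mul ((Real.continuous_rpow_const hq).comp
      (continuous_const.sub continuous_id))).intervalIntegrable _ _)
    (tpie_integrable hq ha hat)
  intro r hr
  have h2 : (0:ℝ) ≤ (t - r) ^ q := Real.rpow_nonneg (by linarith [hr.2]) q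
  calc m * (t - r) ^ q ≤ r ^ e * (t - r) ^ q :=
        mul_le_mul_of_nonneg_right (hme r hr) h2
    _ = (t - r) ^ q * r ^ e := mul_comm _ _

set_option maxHeartbeats 1000000 in
/-- **Integral estimate of truncated powers.**  For `p, q ∈ [0, ∞)` and `η ∈ (0, 1)`
there is a constant `C > 0` such that for all `0 < s ≤ t`,
`(t − s)^p ≤ C ∫_{ηs}^{t} (t − r)^q r^{p − 1 − q} dr`. -/
theorem truncated_power_integral_estimate (p q η : ℝ)
    (hp : 0 ≤ p) (hq : 0 ≤ q) (hη : η ∈ Set.Ioo (0 : ℝ) 1) :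
    ∃ C : ℝ, 0 < C ∧
      ∀ s t : ℝ, 0 < s → s ≤ t →
        (t - s) ^ p ≤ C * ∫ r in (η * s)..t, (t - r) ^ q * r ^ (p - 1 - q) := by
  obtain ⟨hη0, hη1⟩ := hη
  set e : ℝ := p - 1 - q with he
  set α : ℝ := min p (q + 1) with hα
  set β : ℝ := q + 1 - α with hβ
  have hα0 : 0 ≤ α := le_min hp (by linarith)
  have hαp : α ≤ p := min_le_left _ _
  have hβ0 : 0 ≤ β := by
    have := min_le_right p (q + 1); simp only [hβ]; linarith
  have hq1 : (0:ℝ) < q + 1 := by linarith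
  -- the two case constants
  set cB : ℝ := min (η ^ e) (2 ^ e) * (1 - η) ^ β / (q + 1) with hcB
  set cA : ℝ := min ((1/2 : ℝ) ^ e) 1 / (2 ^ (q + 1) * (q + 1)) with hcA
  have hcB0 : 0 < cB := by
    apply div_pos _ hq1
    apply mul_pos (lt_min (Real.rpow_pos_of_pos hη0 _) (Real.rpow_pos_of_pos two_pos _))
    exact Real.rpow_pos_of_pos (by linarith) _
  have hcA0 : 0 < cA := by
    apply div_pos (lt_min (Real.rpow_pos_of_pos (by norm_num) _) one_pos)
    exact mul_pos (Real.rpow_pos_of_pos two_pos _) hq1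
  set c : ℝ := min cA cB with hc
  have hc0 : 0 < c := lt_min hcA0 hcB0
  refine ⟨1 / c, by positivity, fun s t hs hst => ?_⟩
  have ht0 : 0 < t := hs.trans_le hst
  have ha0 : 0 < η * s := mul_pos hη0 hs
  have has : η * s < s := by nlinarith
  have hat : η * s ≤ t := (has.le).trans hst
  set J : ℝ := ∫ r in (η * s)..t, (t - r) ^ q * r ^ e with hJ
  suffices h : c * (t - s) ^ p ≤ J by
    rw [one_div, ← div_eq_inv_mul, le_div_iff₀ hc0, mul_comm]
    exact h
  have hts0 : 0 ≤ t - s := by linarith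
  rcases le_total t (2 * s) with ht2 | ht2
  · -- Case B : t ≤ 2s, use the whole interval
    have hm0 : (0:ℝ) < s ^ e * min (η ^ e) (2 ^ e) :=
      mul_pos (Real.rpow_pos_of_pos hs _)
        (lt_min (Real.rpow_pos_of_pos hη0 _) (Real.rpow_pos_of_pos two_pos _))
    have hme : ∀ r ∈ Set.Icc (η * s) t, s ^ e * min (η ^ e) (2 ^ e) ≤ r ^ e := by
      intro r hr
      refine le_trans (le_min ?_ ?_) (tpie_rpow_min ha0 hr.1 (hr.2.trans ht2))
      · rw [Real.mul_rpow hη0.le hs.le, mul_comm (s ^ e)]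
        exact mul_le_mul_of_nonneg_right (min_le_left _ _) (Real.rpow_nonneg hs.le _)
      · rw [Real.mul_rpow (by norm_num) hs.le, mul_comm (s ^ e)]
        exact mul_le_mul_of_nonneg_right (min_le_right _ _) (Real.rpow_nonneg hs.le _)
    have hJ1 : s ^ e * min (η ^ e) (2 ^ e) * ((t - η * s) ^ (q + 1) / (q + 1)) ≤ J :=
      tpie_lower hq ha0 hat hm0.le hme
    refine le_trans ?_ hJ1
    -- step 1 : (t-s)^p ≤ (t-s)^α * s^(p-α)
    have step1 : (t - s) ^ p ≤ (t - s) ^ α * s ^ (p - α) := by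
      rcases eq_or_lt_of_le hst with rfl | hlt
      · rcases eq_or_lt_of_le hp with rfl | hp0
        · have : α = (0:ℝ) := by
            rw [hα]; exact min_eq_left (by linarith)
          simp [this, sub_self, Real.rpow_zero]
        · rw [sub_self, Real.zero_rpow hp0.ne']
          positivity
      · have h1 : (t - s) ^ p = (t - s) ^ α * (t - s) ^ (p - α) := by
          rw [← Real.rpow_add (by linarith)]; congr 1; ring
        rw [h1]
        apply mul_le_mul_of_nonneg_left _ (Real.rpow_nonneg hts0 _)
        exact Real.rpow_le_rpow hts0 (by linarith) (by linarith)
    -- step 2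
    have hta : 0 < t - η * s := by nlinarith
    have h2 : (t - η * s) ^ (q + 1) = (t - η * s) ^ α * (t - η * s) ^ β := by
      rw [← Real.rpow_add hta]; congr 1; rw [hβ]; ring
    have h3 : (t - s) ^ α ≤ (t - η * s) ^ α :=
      Real.rpow_le_rpow hts0 (by nlinarith) hα0
    have h4 : (1 - η) ^ β * s ^ β ≤ (t - η * s) ^ β := by
      rw [← Real.mul_rpow (by linarith) hs.le]
      exact Real.rpow_le_rpow (by nlinarith) (by nlinarith) hβ0
    have h5 : s ^ e * s ^ β = s ^ (p - α) := by
      rw [← Real.rpow_add hs]; congr 1; rw [he, hβ]; ring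
    calc c * (t - s) ^ p ≤ cB * ((t - s) ^ α * s ^ (p - α)) := by
          apply mul_le_mul (min_le_right _ _) step1 (Real.rpow_nonneg hts0 _) hcB0.le
      _ ≤ s ^ e * min (η ^ e) (2 ^ e) * ((t - η * s) ^ (q + 1) / (q + 1)) := by
          have main : min (η ^ e) (2 ^ e) * (1 - η) ^ β * ((t - s) ^ α * s ^ (p - α))
              ≤ s ^ e * min (η ^ e) (2 ^ e) * (t - η * s) ^ (q + 1) := by
            rw [h2, ← h5]
            calc min (η ^ e) (2 ^ e) * (1 - η) ^ β * ((t - s) ^ α * (s ^ e * s ^ β))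
                = min (η ^ e) (2 ^ e) * s ^ e * ((t - s) ^ α * ((1 - η) ^ β * s ^ β)) := by
                  ring
              _ ≤ min (η ^ e) (2 ^ e) * s ^ e * ((t - η * s) ^ α * (t - η * s) ^ β) := by
                  apply mul_le_mul_of_nonneg_left _ (by positivity)
                  exact mul_le_mul h3 h4
                    (mul_nonneg (Real.rpow_nonneg (by linarith) _) (Real.rpow_nonneg hs.le _))
                    (Real.rpow_nonneg hta.le _)
              _ = s ^ e * min (η ^ e) (2 ^ e) * ((t - η * s) ^ α * (t - η * s) ^ β) := by
                  ring
          calc cB * ((t - s) ^ α * s ^ (p - α))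
              = min (η ^ e) (2 ^ e) * (1 - η) ^ β * ((t - s) ^ α * s ^ (p - α)) / (q + 1) := by
                rw [hcB]; ring
            _ ≤ s ^ e * min (η ^ e) (2 ^ e) * (t - η * s) ^ (q + 1) / (q + 1) :=
                div_le_div_of_nonneg_right main hq1.le
            _ = s ^ e * min (η ^ e) (2 ^ e) * ((t - η * s) ^ (q + 1) / (q + 1)) := by
                ring
  · -- Case A : 2s ≤ t, restrict to [t/2, t]
    have ht20 : 0 < t / 2 := by linarith
    have hst2 : η * s ≤ t / 2 := by nlinarith
    have hsplit : (∫ r in (η * s)..(t/2), (t - r) ^ q * r ^ e)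
        + (∫ r in (t/2)..t, (t - r) ^ q * r ^ e) = J :=
      intervalIntegral.integral_add_adjacent_intervals
        (tpie_integrable hq ha0 hst2) (tpie_integrable hq ht20 (by linarith))
    have hnn : 0 ≤ ∫ r in (η * s)..(t/2), (t - r) ^ q * r ^ e := by
      apply intervalIntegral.integral_nonneg hst2
      intro u hu
      have : 0 < u := ha0.trans_le hu.1
      have : (0:ℝ) ≤ t - u := by
        have := hu.2; linarith
      positivity
    have hm0 : (0:ℝ) < t ^ e * min ((1/2 : ℝ) ^ e) 1 :=
      mul_pos (Real.rpow_pos_of_pos ht0 _)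
        (lt_min (Real.rpow_pos_of_pos (by norm_num) _) one_pos)
    have hme : ∀ r ∈ Set.Icc (t/2) t, t ^ e * min ((1/2 : ℝ) ^ e) 1 ≤ r ^ e := by
      intro r hr
      refine le_trans (le_min ?_ ?_) (tpie_rpow_min ht20 hr.1 hr.2)
      · rw [show t / 2 = t * (1/2) by ring, Real.mul_rpow ht0.le (by norm_num)]
        exact mul_le_mul_of_nonneg_left (min_le_left _ _) (Real.rpow_nonneg ht0.le _)
      · calc t ^ e * min ((1/2 : ℝ) ^ e) 1 ≤ t ^ e * 1 :=
              mul_le_mul_of_nonneg_left (min_le_right _ _) (Real.rpow_nonneg ht0.le _)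
          _ = t ^ e := mul_one _
    have hJ1 : t ^ e * min ((1/2 : ℝ) ^ e) 1 * ((t - t/2) ^ (q + 1) / (q + 1))
        ≤ ∫ r in (t/2)..t, (t - r) ^ q * r ^ e :=
      tpie_lower hq ht20 (by linarith) hm0.le hme
    have key : cA * t ^ p = t ^ e * min ((1/2 : ℝ) ^ e) 1 * ((t - t/2) ^ (q + 1) / (q + 1)) := by
      have e1 : t - t/2 = t / 2 := by ring
      have e2 : (t/2) ^ (q+1) = t ^ (q+1) / 2 ^ (q+1) :=
        Real.div_rpow ht0.le (by norm_num) _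
      have e3 : t ^ e * t ^ (q+1) = t ^ p := by
        rw [← Real.rpow_add ht0]; congr 1; rw [he]; ring
      have h2q : ((2:ℝ) ^ (q+1)) ≠ 0 := (Real.rpow_pos_of_pos two_pos _).ne'
      have hq1' : (q + 1 : ℝ) ≠ 0 := hq1.ne'
      rw [e1, e2, hcA, ← e3]
      field_simp
    calc c * (t - s) ^ p ≤ cA * t ^ p := by
          apply mul_le_mul (min_le_left _ _)
            (Real.rpow_le_rpow hts0 (by linarith) hp) (Real.rpow_nonneg hts0 _) hcA0.le
      _ = t ^ e * min ((1/2 : ℝ) ^ e) 1 * ((t - t/2) ^ (q + 1) / (q + 1)) := key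
      _ ≤ ∫ r in (t/2)..t, (t - r) ^ q * r ^ e := hJ1
      _ ≤ J := by linarith [hsplit, hnn]
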